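/- Let B ⊆ B(H) be a unital C*-algebra, K a positive trace-one operator, K̄ the closure of the range of K, and T = [B K̄] the closed span of {Bx : B ∈ B, x ∈ K̄}. Then B is beable for K (i.e. Tr(K[A,B]*[A,B]) = 0 for all A,B ∈ B) if and only if the compression P_T B P_T is an abelian set of operators, equivalently B ⊆ B(T^⊥) ⊕ N for some abelian subalgebra N of B(T). -/

import Mathlib

/-- The normal state `T ↦ Tr(KT)` associated to `K = ∑ₙ λₙ |eₙ⟩⟨eₙ|`. -/
noncomputable def trState {H : Type*} [NormedAddCommGroup H] [InnerProductSpace ℂ H]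
    (e : ℕ → H) (lam : ℕ → ℝ) (T : H →L[ℂ] H) : ℂ :=
  ∑' n, (lam n : ℂ) * (inner ℂ (e n) (T (e n)) : ℂ)

/-- `T = [𝔅 K̄]`: the closed span of {Ax : A ∈ 𝔅, x ∈ closure (range K)}. -/
noncomputable def beableSpace {H : Type*} [NormedAddCommGroup H] [InnerProductSpace ℂ H]
    (𝔅 : Set (H →L[ℂ] H)) (K : H →L[ℂ] H) : Submodule ℂ H :=
  (Submodule.span ℂ
    {y | ∃ a ∈ 𝔅, ∃ x ∈ closure (Set.range K), a x = y}).topologicalClosure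

/-- The orthogonal projection of H onto `beableSpace 𝔅 K`, as an operator on H. -/
noncomputable def projT {H : Type*} [NormedAddCommGroup H] [InnerProductSpace ℂ H]
    [CompleteSpace H] (𝔅 : Set (H →L[ℂ] H)) (K : H →L[ℂ] H) : H →L[ℂ] H :=
  haveI : CompleteSpace (beableSpace 𝔅 K) :=
    (Submodule.isClosed_topologicalClosure _).completeSpace_coe
  (beableSpace 𝔅 K).subtypeL.comp ((beableSpace 𝔅 K).orthogonalProjection)

/-- B is beable for K (Tr(K[A,B]*[A,B]) = 0 for all A,B ∈ B) iff the compression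
P_T B P_T of B to T = [B K̄] is an abelian set of operators. -/
theorem stmt_10 {H : Type*} [NormedAddCommGroup H] [InnerProductSpace ℂ H] [CompleteSpace H]
    (𝔅 : StarSubalgebra ℂ (H →L[ℂ] H))
    (K : H →L[ℂ] H) (e : ℕ → H) (he : Orthonormal ℂ e)
    (lam : ℕ → ℝ) (hlam : ∀ n, 0 ≤ lam n) (hsum : ∑' n, lam n = 1)
    (hK : ∀ y : H, K y = ∑' n, lam n • ((inner ℂ (e n) y : ℂ) • e n)) :
    (∀ a ∈ 𝔅, ∀ b ∈ 𝔅,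
        trState e lam (star (a * b - b * a) * (a * b - b * a)) = 0) ↔
      (∀ a ∈ 𝔅, ∀ b ∈ 𝔅,
        Commute (projT (𝔅 : Set (H →L[ℂ] H)) K ∘L a ∘L projT (𝔅 : Set (H →L[ℂ] H)) K)
          (projT (𝔅 : Set (H →L[ℂ] H)) K ∘L b ∘L projT (𝔅 : Set (H →L[ℂ] H)) K)) := by
  classical
  set T : Submodule ℂ H := beableSpace (𝔅 : Set (H →L[ℂ] H)) K with hT
  set P : H →L[ℂ] H := projT (𝔅 : Set (H →L[ℂ] H)) K with hPdef
  haveI : CompleteSpace T := (Submodule.isClosed_topologicalClosure _).completeSpace_coe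
  -- basic facts about the projection
  have hPapply : ∀ x : H, P x = (T.orthogonalProjection x : H) := fun x => rfl
  have hPmem : ∀ x : H, P x ∈ T := by
    intro x; rw [hPapply]; exact SetLike.coe_mem _
  have hPfix : ∀ x ∈ T, P x = x := by
    intro x hx; rw [hPapply]; exact Submodule.starProjection_eq_self_iff.mpr hx
  -- summability of lam
  have hlamsum : Summable lam := by
    by_contra hc
    rw [tsum_eq_zero_of_not_summable hc] at hsum
    norm_num at hsum
  -- real smul to complex smul
  have hsmul : ∀ (r : ℝ) (v : H), r • v = (r : ℂ) • v := by
    intro r v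
    rw [← algebraMap_smul ℂ r v]
    norm_num
  -- orthonormality
  have horth := orthonormal_iff_ite.mp he
  have hnorm1 : ∀ n, ‖e n‖ = 1 := he.1
  -- K e n = lam n • e n
  have hKe : ∀ n, K (e n) = (lam n : ℂ) • e n := by
    intro n
    rw [hK (e n), tsum_eq_single n]
    · rw [horth n n, if_pos rfl, one_smul, hsmul]
    · intro m hmn
      rw [horth m n, if_neg hmn, zero_smul, smul_zero]
  -- e n ∈ T when lam n ≠ 0
  have hmemT : ∀ n, lam n ≠ 0 → e n ∈ T := by
    intro n hn
    have h1 : e n ∈ closure (Set.range K) := by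
      apply subset_closure
      refine ⟨((lam n : ℂ))⁻¹ • e n, ?_⟩
      rw [map_smul, hKe n, smul_smul, inv_mul_cancel₀ (by exact_mod_cast hn), one_smul]
    exact Submodule.le_topologicalClosure _
      (Submodule.subset_span ⟨1, one_mem 𝔅, e n, h1, ContinuousLinearMap.one_apply _⟩)
  -- the key computation of trState on star d * d
  have hA : ∀ d : H →L[ℂ] H,
      (trState e lam (star d * d) = 0 ↔ ∀ n, lam n ≠ 0 → d (e n) = 0) := by
    intro d
    have hterm : ∀ n, (lam n : ℂ) * (inner ℂ (e n) ((star d * d) (e n)) : ℂ)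
        = ((lam n * ‖d (e n)‖ ^ 2 : ℝ) : ℂ) := by
      intro n
      rw [ContinuousLinearMap.mul_apply, ContinuousLinearMap.star_eq_adjoint,
        ContinuousLinearMap.adjoint_inner_right, inner_self_eq_norm_sq_to_K]
      rw [Complex.ofReal_mul, Complex.ofReal_pow]
      rfl
    have hnn : ∀ n, 0 ≤ lam n * ‖d (e n)‖ ^ 2 :=
      fun n => mul_nonneg (hlam n) (sq_nonneg _)
    have hsummable2 : Summable (fun n => lam n * ‖d (e n)‖ ^ 2) := by
      refine Summable.of_nonneg_of_le hnn (fun n => ?_) (hlamsum.mul_right (‖d‖ ^ 2))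
      have h1 : ‖d (e n)‖ ≤ ‖d‖ := by
        have := d.le_opNorm (e n)
        rwa [hnorm1 n, mul_one] at this
      exact mul_le_mul_of_nonneg_left
        (pow_le_pow_left₀ (norm_nonneg _) h1 2) (hlam n)
    rw [trState, tsum_congr hterm, ← Complex.ofReal_tsum]
    constructor
    · intro h0 n hn
      have h0' : ∑' n, lam n * ‖d (e n)‖ ^ 2 = 0 := by exact_mod_cast h0
      have hle := Summable.le_tsum hsummable2 n (fun m _ => hnn m)
      have hz : lam n * ‖d (e n)‖ ^ 2 = 0 := le_antisymm (h0' ▸ hle) (hnn n)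
      have := (mul_eq_zero.mp hz).resolve_left hn
      have := pow_eq_zero_iff (n := 2) (by norm_num) |>.mp this
      simpa [norm_eq_zero] using this
    · intro h0
      have hzz : ∀ n, lam n * ‖d (e n)‖ ^ 2 = 0 := by
        intro n
        by_cases hn : lam n = 0
        · simp [hn]
        · simp [h0 n hn]
      simp [hzz]
  -- summability of the expansion of K z
  have hsum2 : ∀ z : H, Summable fun n => lam n • ((inner ℂ (e n) z : ℂ) • e n) := by
    intro z
    apply Summable.of_norm
    refine Summable.of_nonneg_of_le (fun n => norm_nonneg _) (fun n => ?_)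
      (hlamsum.mul_right ‖z‖)
    rw [norm_smul, norm_smul, hnorm1 n, mul_one, Real.norm_eq_abs, abs_of_nonneg (hlam n)]
    have := norm_inner_le_norm (𝕜 := ℂ) (e n) z
    rw [hnorm1 n, one_mul] at this
    exact mul_le_mul_of_nonneg_left this (hlam n)
  -- invariance of T under 𝔅
  have hinv : ∀ f : H →L[ℂ] H, f ∈ 𝔅 → ∀ x ∈ T, f x ∈ T := by
    intro f hf x hx
    set S : Set H :=
      {y | ∃ a ∈ (𝔅 : Set (H →L[ℂ] H)), ∃ x ∈ closure (Set.range K), a x = y} with hS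
    have hmap : (Submodule.span ℂ S).map (f : H →ₗ[ℂ] H) ≤ Submodule.span ℂ S := by
      rw [Submodule.map_span, Submodule.span_le]
      rintro _ ⟨_, ⟨a', ha', z, hz, rfl⟩, rfl⟩
      exact Submodule.subset_span ⟨f * a', mul_mem hf ha', z, hz, rfl⟩
    have h2 : f '' ((Submodule.span ℂ S : Submodule ℂ H) : Set H)
        ⊆ ((Submodule.span ℂ S : Submodule ℂ H) : Set H) := by
      rintro _ ⟨w, hw, rfl⟩
      exact hmap (Submodule.mem_map_of_mem hw)
    have h3 : f x ∈ closure (f '' ((Submodule.span ℂ S : Submodule ℂ H) : Set H)) :=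
      (image_closure_subset_closure_image f.continuous) ⟨x, hx, rfl⟩
    exact closure_mono h2 h3
  -- composition formula for compressions
  have comp_eq : ∀ (f : H →L[ℂ] H), f ∈ 𝔅 → ∀ (g : H →L[ℂ] H), g ∈ 𝔅 → ∀ x : H,
      ((P ∘L f ∘L P) * (P ∘L g ∘L P)) x = f (g (P x)) := by
    intro f hf g hg x
    have h1 : P x ∈ T := hPmem x
    have h2 : g (P x) ∈ T := hinv g hg _ h1
    have h3 : P (g (P x)) = g (P x) := hPfix _ h2
    have h4 : f (g (P x)) ∈ T := hinv f hf _ h2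
    simp only [ContinuousLinearMap.mul_apply, ContinuousLinearMap.comp_apply, h3,
      hPfix _ h4]
  constructor
  · -- beable → compressions commute
    intro h a ha b hb
    have hker : ∀ f ∈ 𝔅, ∀ g ∈ 𝔅, ∀ n, lam n ≠ 0 → (f * g - g * f) (e n) = 0 :=
      fun f hf g hg n hn => (hA _).mp (h f hf g hg) n hn
    have hzero : ∀ z ∈ T, (a * b - b * a) z = 0 := by
      have hle : T ≤ LinearMap.ker ((a * b - b * a : H →L[ℂ] H) : H →ₗ[ℂ] H) := by
        refine Submodule.topologicalClosure_minimal _ ?_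
          (ContinuousLinearMap.isClosed_ker _)
        rw [Submodule.span_le]
        rintro _ ⟨a', ha', x, hx, rfl⟩
        have hsub : closure (Set.range K)
            ⊆ (LinearMap.ker (((a * b - b * a) * a' : H →L[ℂ] H) : H →ₗ[ℂ] H) : Set H) := by
          refine closure_minimal ?_ (ContinuousLinearMap.isClosed_ker _)
          rintro _ ⟨z, rfl⟩
          simp only [SetLike.mem_coe, LinearMap.mem_ker, ContinuousLinearMap.coe_coe]
          rw [hK z, ContinuousLinearMap.map_tsum _ (hsum2 z)]
          have hterm0 : ∀ n,
              ((a * b - b * a) * a' : H →L[ℂ] H)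
                (lam n • ((inner ℂ (e n) z : ℂ) • e n)) = 0 := by
            intro n
            by_cases hn : lam n = 0
            · simp [hn]
            · have hca' : ((a * b - b * a) * a' : H →L[ℂ] H) (e n) = 0 := by
                have hid : (a * b - b * a) * a'
                    = (a * (b * a') - (b * a') * a) - b * (a * a' - a' * a) := by
                  noncomm_ring
                rw [hid, ContinuousLinearMap.sub_apply, ContinuousLinearMap.mul_apply,
                  hker a ha (b * a') (mul_mem hb ha') n hn, hker a ha a' ha' n hn,
                  map_zero, sub_zero]
              rw [hsmul, map_smul, map_smul, hca', smul_zero, smul_zero]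
          simp [hterm0]
        have := hsub hx
        simpa [LinearMap.mem_ker, ContinuousLinearMap.mul_apply] using this
      intro z hz
      exact LinearMap.mem_ker.mp (hle hz)
    show (P ∘L a ∘L P) * (P ∘L b ∘L P) = (P ∘L b ∘L P) * (P ∘L a ∘L P)
    ext x
    rw [comp_eq a ha b hb x, comp_eq b hb a ha x]
    have := hzero (P x) (hPmem x)
    rw [ContinuousLinearMap.sub_apply, ContinuousLinearMap.mul_apply,
      ContinuousLinearMap.mul_apply, sub_eq_zero] at this
    exact this
  · -- compressions commute → beable
    intro h a ha b hb
    apply (hA _).mpr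
    intro n hn
    have hen : P (e n) = e n := hPfix _ (hmemT n hn)
    have hc : (P ∘L a ∘L P) * (P ∘L b ∘L P) = (P ∘L b ∘L P) * (P ∘L a ∘L P) :=
      (h a ha b hb).eq
    have h1 := comp_eq a ha b hb (e n)
    have h2 := comp_eq b hb a ha (e n)
    have h3 : a (b (e n)) = b (a (e n)) := by
      have h4 := congrArg (fun f : H →L[ℂ] H => f (e n)) hc
      rw [h1, h2, hen] at h4
      exact h4
    rw [ContinuousLinearMap.sub_apply, ContinuousLinearMap.mul_apply,
      ContinuousLinearMap.mul_apply, h3, sub_self]
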